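/- Let g be a meromorphic function and ω a holomorphic 1-form forming Weierstrass data (poles of g of order k are zeros of ω of order 2k), and let Q = ω·dg be the Hopf differential. Then for a point z and k ≥ 1, z is a zero of Q of order k if and only if one of the following holds: z is a zero of g of order k+1, or z is a pole of g of order k+1, or z is a zero of dg/g of order k (with g(z) ≠ 0, ∞). -/

import Mathlib

open Filter Topology

/-- `f` has order exactly `n` at `z₀`: near `z₀` (off `z₀`), `f z = (z-z₀)^n · g z`
with `g` analytic and nonvanishing at `z₀`. -/
def OrdAt (f : ℂ → ℂ) (z₀ : ℂ) (n : ℤ) : Prop :=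
  ∃ g : ℂ → ℂ, AnalyticAt ℂ g z₀ ∧ g z₀ ≠ 0 ∧
    ∀ᶠ z in nhdsWithin z₀ {z₀}ᶜ, f z = (z - z₀)^n * g z

lemma ordAt_congr_iff {f f' : ℂ → ℂ} {z : ℂ} {n : ℤ}
    (hff : ∀ᶠ ζ in 𝓝[≠] z, f ζ = f' ζ) : OrdAt f z n ↔ OrdAt f' z n := by
  constructor <;> rintro ⟨g, hg, hg0, he⟩ <;> refine ⟨g, hg, hg0, ?_⟩ <;>
    filter_upwards [he, hff] with ζ h1 h2
  · rw [← h2]; exact h1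
  · rw [h2]; exact h1

lemma ordAt_lt_absurd {f : ℂ → ℂ} {z : ℂ} {m n : ℤ} (hmn : m < n)
    (hm : OrdAt f z m) (hn : OrdAt f z n) : False := by
  obtain ⟨g₁, hg₁, hg₁0, he₁⟩ := hm
  obtain ⟨g₂, hg₂, hg₂0, he₂⟩ := hn
  set d : ℕ := (n - m).toNat with hdd
  have hd : (n - m : ℤ) = d := (Int.toNat_of_nonneg (by omega)).symm
  have key : ∀ᶠ ζ in 𝓝[≠] z, g₁ ζ = (ζ - z) ^ d * g₂ ζ := by
    filter_upwards [he₁, he₂, eventually_mem_nhdsWithin] with ζ h1 h2 hζ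
    have hzz : ζ - z ≠ 0 := sub_ne_zero.2 hζ
    have h3 : (ζ - z) ^ m * g₁ ζ = (ζ - z) ^ m * ((ζ - z) ^ d * g₂ ζ) := by
      rw [← h1, h2, ← mul_assoc, ← zpow_natCast (ζ - z) d, ← zpow_add₀ hzz,
        show m + (d : ℤ) = n by omega]
    exact mul_left_cancel₀ (zpow_ne_zero _ hzz) h3
  have t1 : Tendsto g₁ (𝓝[≠] z) (𝓝 (g₁ z)) :=
    hg₁.continuousAt.continuousWithinAt
  have t2 : Tendsto (fun ζ => (ζ - z) ^ d * g₂ ζ) (𝓝[≠] z) (𝓝 0) := by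
    have hc : ContinuousAt (fun ζ => (ζ - z) ^ d * g₂ ζ) z :=
      (((continuous_id.sub continuous_const).pow d).continuousAt).mul hg₂.continuousAt
    have t2' : Tendsto (fun ζ => (ζ - z) ^ d * g₂ ζ) (𝓝[≠] z)
        (𝓝 ((z - z) ^ d * g₂ z)) := hc.continuousWithinAt
    simpa [zero_pow (show d ≠ 0 by omega)] using t2'
  exact hg₁0 (tendsto_nhds_unique (t1.congr' key) t2)

lemma ordAt_unique {f : ℂ → ℂ} {z : ℂ} {m n : ℤ}
    (hm : OrdAt f z m) (hn : OrdAt f z n) : m = n := by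
  rcases lt_trichotomy m n with h | h | h
  · exact absurd (ordAt_lt_absurd h hm hn) (not_false)
  · exact h
  · exact absurd (ordAt_lt_absurd h hn hm) (not_false)

lemma ordAt_mul {f₁ f₂ : ℂ → ℂ} {z : ℂ} {m n : ℤ}
    (h₁ : OrdAt f₁ z m) (h₂ : OrdAt f₂ z n) :
    OrdAt (fun ζ => f₁ ζ * f₂ ζ) z (m + n) := by
  obtain ⟨g₁, hg₁, hg₁0, he₁⟩ := h₁
  obtain ⟨g₂, hg₂, hg₂0, he₂⟩ := h₂
  refine ⟨fun ζ => g₁ ζ * g₂ ζ, hg₁.mul hg₂, mul_ne_zero hg₁0 hg₂0, ?_⟩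
  filter_upwards [he₁, he₂, eventually_mem_nhdsWithin] with ζ h1 h2 hζ
  rw [h1, h2, zpow_add₀ (sub_ne_zero.2 hζ)]; ring

lemma ordAt_unit_mul_iff {u f : ℂ → ℂ} {z : ℂ} {n : ℤ}
    (hu : AnalyticAt ℂ u z) (hu0 : u z ≠ 0) :
    OrdAt (fun ζ => u ζ * f ζ) z n ↔ OrdAt f z n := by
  constructor
  · rintro ⟨g, hg, hg0, he⟩
    refine ⟨fun ζ => g ζ / u ζ, hg.div hu hu0, div_ne_zero hg0 hu0, ?_⟩
    have hune : ∀ᶠ ζ in 𝓝[≠] z, u ζ ≠ 0 :=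
      (hu.continuousAt.eventually_ne hu0).filter_mono nhdsWithin_le_nhds
    filter_upwards [he, hune] with ζ h1 h2
    field_simp
    linear_combination h1
  · rintro ⟨g, hg, hg0, he⟩
    refine ⟨fun ζ => u ζ * g ζ, hu.mul hg, mul_ne_zero hu0 hg0, ?_⟩
    filter_upwards [he] with ζ h1
    rw [h1]; ring

lemma analyticAt_deriv {f : ℂ → ℂ} {z : ℂ} (h : AnalyticAt ℂ f z) :
    AnalyticAt ℂ (deriv f) z := by
  have h1 : AnalyticAt ℂ (fderiv ℂ f) z := h.fderiv
  have h2 : AnalyticAt ℂ (fun L : ℂ →L[ℂ] ℂ => L 1) (fderiv ℂ f z) :=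
    (ContinuousLinearMap.apply ℂ ℂ (1 : ℂ)).analyticAt _
  have h3 := h2.comp h1
  exact h3

lemma ordAt_deriv {g : ℂ → ℂ} {z : ℂ} {n : ℤ} (hn : n ≠ 0) (h : OrdAt g z n) :
    OrdAt (deriv g) z (n - 1) := by
  obtain ⟨h₀, hh, hh0, he⟩ := h
  refine ⟨fun ζ => (n : ℂ) * h₀ ζ + (ζ - z) * deriv h₀ ζ, ?_, ?_, ?_⟩
  · exact (analyticAt_const.mul hh).add
      ((analyticAt_id.sub analyticAt_const).mul (analyticAt_deriv hh))
  · simpa using mul_ne_zero (Int.cast_ne_zero.2 hn : (n : ℂ) ≠ 0) hh0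
  · have hev : ∀ᶠ ζ in 𝓝 z,
        (ζ ∈ ({z}ᶜ : Set ℂ) → g ζ = (ζ - z) ^ n * h₀ ζ) ∧ AnalyticAt ℂ h₀ ζ :=
      (eventually_nhdsWithin_iff.mp he).and hh.eventually_analyticAt
    obtain ⟨U, hUsub, hUopen, hzU⟩ := eventually_nhds_iff.mp hev
    have hUmem : ∀ᶠ ζ in 𝓝[≠] z, ζ ∈ U :=
      eventually_nhdsWithin_of_eventually_nhds (hUopen.eventually_mem hzU)
    filter_upwards [hUmem, eventually_mem_nhdsWithin] with ζ₀ hζ₀U hζ₀mem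
    have hζ₀ne : ζ₀ ≠ z := hζ₀mem
    have hgF : g =ᶠ[𝓝 ζ₀] fun ζ => (ζ - z) ^ n * h₀ ζ := by
      have hmem : ∀ᶠ ζ in 𝓝 ζ₀, ζ ∈ U ∩ {z}ᶜ :=
        (hUopen.inter isOpen_compl_singleton).eventually_mem ⟨hζ₀U, hζ₀ne⟩
      filter_upwards [hmem] with ζ hζ
      exact (hUsub ζ hζ.1).1 hζ.2
    rw [hgF.deriv_eq]
    have h1 : HasDerivAt (fun ζ => (ζ - z) ^ n) ((n : ℂ) * (ζ₀ - z) ^ (n - 1)) ζ₀ := by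
      have := (hasDerivAt_zpow n (ζ₀ - z) (Or.inl (sub_ne_zero.2 hζ₀ne))).comp ζ₀
        ((hasDerivAt_id ζ₀).sub_const z)
      simpa [Function.comp_def] using this
    have h2 : HasDerivAt h₀ (deriv h₀ ζ₀) ζ₀ :=
      ((hUsub ζ₀ hζ₀U).2.differentiableAt).hasDerivAt
    rw [HasDerivAt.deriv (f := fun ζ => (ζ - z) ^ n * h₀ ζ) (h1.mul h2)]
    have hpow : (ζ₀ - z) ^ n = (ζ₀ - z) ^ (n - 1) * (ζ₀ - z) := by
      conv_lhs => rw [show n = n - 1 + 1 by ring]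
      rw [zpow_add_one₀ (sub_ne_zero.2 hζ₀ne)]
    rw [hpow]; ring

theorem stmt17 (g w : ℂ → ℂ) (z : ℂ)
    (hgmero : ∃ n : ℤ, OrdAt g z n)
    (hweier : ∀ n : ℤ, OrdAt g z n → OrdAt w z (2 * max (-n) 0))
    (k : ℕ) (hk : 1 ≤ k) :
    OrdAt (fun ζ => w ζ * deriv g ζ) z (k : ℤ) ↔
      (OrdAt g z ((k : ℤ) + 1) ∨ OrdAt g z (-((k : ℤ) + 1)) ∨
        (OrdAt g z 0 ∧ OrdAt (fun ζ => deriv g ζ / g ζ) z (k : ℤ))) := by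
  obtain ⟨n, hgn⟩ := hgmero
  rcases lt_trichotomy n 0 with hneg | hzero | hpos
  · -- n < 0
    have hw : OrdAt w z (2 * (-n)) := by
      have := hweier n hgn
      rwa [max_eq_left (by omega : (0:ℤ) ≤ -n)] at this
    have hQ : OrdAt (fun ζ => w ζ * deriv g ζ) z (2 * (-n) + (n - 1)) :=
      ordAt_mul hw (ordAt_deriv (by omega) hgn)
    constructor
    · intro hQk
      have hk' : (k : ℤ) = 2 * (-n) + (n - 1) := ordAt_unique hQk hQ
      right; left
      rwa [show -((k:ℤ)+1) = n by omega]
    · rintro (h | h | ⟨h0, _⟩)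
      · have := ordAt_unique hgn h; omega
      · have hk' := ordAt_unique hgn h
        rwa [show (k:ℤ) = 2*(-n) + (n-1) by omega]
      · have := ordAt_unique hgn h0; omega
  · -- n = 0
    subst hzero
    obtain ⟨h₀, hh, hh0, heg⟩ := id hgn
    have hw : OrdAt w z 0 := by simpa using hweier 0 hgn
    obtain ⟨u, hu, hu0, heu⟩ := hw
    have iffQ : OrdAt (fun ζ => w ζ * deriv g ζ) z (k:ℤ) ↔ OrdAt (deriv g) z (k:ℤ) := by
      refine (ordAt_congr_iff (f' := fun ζ => u ζ * deriv g ζ) ?_).trans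
        (ordAt_unit_mul_iff hu hu0)
      filter_upwards [heu] with ζ h1
      rw [h1]; simp
    have iffD : OrdAt (fun ζ => deriv g ζ / g ζ) z (k:ℤ) ↔ OrdAt (deriv g) z (k:ℤ) := by
      refine (ordAt_congr_iff (f' := fun ζ => (h₀ ζ)⁻¹ * deriv g ζ) ?_).trans
        (ordAt_unit_mul_iff (hh.inv hh0) (inv_ne_zero hh0))
      filter_upwards [heg] with ζ h1
      rw [div_eq_inv_mul, h1]; simp
    constructor
    · intro hQk
      exact Or.inr (Or.inr ⟨hgn, iffD.mpr (iffQ.mp hQk)⟩)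
    · rintro (h | h | ⟨_, h⟩)
      · have := ordAt_unique hgn h; omega
      · have := ordAt_unique hgn h; omega
      · exact iffQ.mpr (iffD.mp h)
  · -- n > 0
    have hw : OrdAt w z 0 := by
      have := hweier n hgn
      rwa [max_eq_right (by omega : -n ≤ (0:ℤ)), mul_zero] at this
    have hQ : OrdAt (fun ζ => w ζ * deriv g ζ) z (0 + (n - 1)) :=
      ordAt_mul hw (ordAt_deriv (by omega) hgn)
    constructor
    · intro hQk
      have hk' := ordAt_unique hQk hQ
      left; rwa [show (k:ℤ)+1 = n by omega]
    · rintro (h | h | ⟨h0, _⟩)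
      · have hk' := ordAt_unique hgn h
        rwa [show (k:ℤ) = 0 + (n-1) by omega]
      · have := ordAt_unique hgn h; omega
      · have := ordAt_unique hgn h0; omega
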